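/- Under the hypotheses of Theorem 4.2 (flat bottom, spatially constant pressure, initial data equal to the local approximated geostrophic equilibrium (4.15) with perturbation parameter ε), the exact flux divergence evaluated on the initial data is O(ε²): specifically, ∂_θ(Q_θ*/σ) + ∂_φ(Q_φ*) = O(ε²) where Q_θ* = h_σ*u_θ*, Q_φ* = h_σ*u_φ*, h_σ* = h*σ. -/

import Mathlib

/-- on the initial data (4.15) of Theorem 4.2 the exact flux
divergence ∂_θ(Q_θ*/σ) + ∂_φ Q_φ* is O(ε²), uniformly on the cell, with
Q_θ* = h* σ u_θ*, Q_φ* = h* (σ u_φ*) and σ = cos φ bounded away from zero. -/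
theorem stmt_17 (R f g hi u₀ u₁ u₂ v₀ v₁ θi φi Δθ Δφ σmin : ℝ)
    (hg : g ≠ 0) (hσmin : 0 < σmin)
    (hσ : ∀ φ ∈ Set.Icc (φi - Δφ / 2) (φi + Δφ / 2), σmin ≤ Real.cos φ)
    (uθ v : ℝ → ℝ → ℝ → ℝ) (hstar : ℝ → ℝ → ℝ → ℝ)
    (huθ : ∀ ε θ φ, uθ ε θ φ = ε * (u₀ + u₁ * (θ - θi) + u₂ * (φ - φi)))
    (hv : ∀ ε θ φ, v ε θ φ = ε * (v₀ + v₁ * (θ - θi) - u₁ * (φ - φi)))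
    (hh : ∀ ε θ φ, hstar ε θ φ = hi + ε * (R * f / g) *
        (v₀ * (θ - θi) + v₁ / 2 * (θ - θi) ^ 2 - u₀ * (φ - φi)
          - u₂ / 2 * (φ - φi) ^ 2 - u₁ * (θ - θi) * (φ - φi))) :
    ∃ K : ℝ, ∀ ε : ℝ, ∀ θ ∈ Set.Icc (θi - Δθ / 2) (θi + Δθ / 2),
      ∀ φ ∈ Set.Icc (φi - Δφ / 2) (φi + Δφ / 2),
        |deriv (fun θ' => hstar ε θ' φ * Real.cos φ * uθ ε θ' φ / Real.cos φ) θ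
          + deriv (fun φ' => hstar ε θ φ' * v ε θ φ') φ| ≤ K * ε ^ 2 := by
  refine ⟨0, fun ε θ hθ φ hφ => ?_⟩
  have hc : Real.cos φ ≠ 0 := ne_of_gt (lt_of_lt_of_le hσmin (hσ φ hφ))
  have hfun1 : (fun θ' => hstar ε θ' φ * Real.cos φ * uθ ε θ' φ / Real.cos φ)
      = fun θ' => hstar ε θ' φ * uθ ε θ' φ := by
    funext θ'
    field_simp
  rw [hfun1]
  have idθ : HasDerivAt (fun x : ℝ => x - θi) 1 θ := (hasDerivAt_id θ).sub_const θi
  have idφ : HasDerivAt (fun x : ℝ => x - φi) 1 φ := (hasDerivAt_id φ).sub_const φi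
  -- derivative of h* in θ
  have hPθ : HasDerivAt (fun θ' => hstar ε θ' φ)
      (ε * (R * f / g) * (v₀ + v₁ * (θ - θi) - u₁ * (φ - φi))) θ := by
    have h1 : HasDerivAt (fun θ' => hi + ε * (R * f / g) *
        (v₀ * (θ' - θi) + v₁ / 2 * (θ' - θi) ^ 2 - u₀ * (φ - φi)
          - u₂ / 2 * (φ - φi) ^ 2 - u₁ * (θ' - θi) * (φ - φi)))
        (0 + ε * (R * f / g) * (v₀ * 1 + v₁ / 2 * ((2 : ℕ) * (θ - θi) ^ 1 * 1)
          - 0 - 0 - u₁ * 1 * (φ - φi))) θ :=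
      (hasDerivAt_const θ hi).add ((((((idθ.const_mul v₀).add
        ((idθ.pow 2).const_mul (v₁ / 2))).sub (hasDerivAt_const θ _)).sub
        (hasDerivAt_const θ _)).sub ((idθ.const_mul u₁).mul_const (φ - φi))).const_mul _)
    have h2 : (fun θ' => hstar ε θ' φ) = (fun θ' => hi + ε * (R * f / g) *
        (v₀ * (θ' - θi) + v₁ / 2 * (θ' - θi) ^ 2 - u₀ * (φ - φi)
          - u₂ / 2 * (φ - φi) ^ 2 - u₁ * (θ' - θi) * (φ - φi))) := by
      funext θ'; exact hh ε θ' φ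
    rw [h2]
    convert h1 using 1
    push_cast
    ring
  -- derivative of uθ in θ
  have hBθ : HasDerivAt (fun θ' => uθ ε θ' φ) (ε * u₁) θ := by
    have h1 : HasDerivAt (fun θ' => ε * (u₀ + u₁ * (θ' - θi) + u₂ * (φ - φi)))
        (ε * (0 + u₁ * 1 + 0)) θ :=
      (((hasDerivAt_const θ u₀).add (idθ.const_mul u₁)).add
        (hasDerivAt_const θ _)).const_mul ε
    have h2 : (fun θ' => uθ ε θ' φ)
        = fun θ' => ε * (u₀ + u₁ * (θ' - θi) + u₂ * (φ - φi)) := by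
      funext θ'; exact huθ ε θ' φ
    rw [h2]
    convert h1 using 1
    ring
  -- derivative of h* in φ
  have hPφ : HasDerivAt (fun φ' => hstar ε θ φ')
      (ε * (R * f / g) * (-u₀ - u₂ * (φ - φi) - u₁ * (θ - θi))) φ := by
    have h1 : HasDerivAt (fun φ' => hi + ε * (R * f / g) *
        (v₀ * (θ - θi) + v₁ / 2 * (θ - θi) ^ 2 - u₀ * (φ' - φi)
          - u₂ / 2 * (φ' - φi) ^ 2 - u₁ * (θ - θi) * (φ' - φi)))
        (0 + ε * (R * f / g) * (0 + 0 - u₀ * 1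
          - u₂ / 2 * ((2 : ℕ) * (φ - φi) ^ 1 * 1) - u₁ * (θ - θi) * 1)) φ :=
      (hasDerivAt_const φ hi).add ((((((hasDerivAt_const φ _).add
        (hasDerivAt_const φ _)).sub (idφ.const_mul u₀)).sub
        ((idφ.pow 2).const_mul (u₂ / 2))).sub
        (idφ.const_mul (u₁ * (θ - θi)))).const_mul _)
    have h2 : (fun φ' => hstar ε θ φ') = (fun φ' => hi + ε * (R * f / g) *
        (v₀ * (θ - θi) + v₁ / 2 * (θ - θi) ^ 2 - u₀ * (φ' - φi)
          - u₂ / 2 * (φ' - φi) ^ 2 - u₁ * (θ - θi) * (φ' - φi))) := by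
      funext φ'; exact hh ε θ φ'
    rw [h2]
    convert h1 using 1
    push_cast
    ring
  -- derivative of v in φ
  have hCφ : HasDerivAt (fun φ' => v ε θ φ') (ε * (-u₁)) φ := by
    have h1 : HasDerivAt (fun φ' => ε * (v₀ + v₁ * (θ - θi) - u₁ * (φ' - φi)))
        (ε * (0 + 0 - u₁ * 1)) φ :=
      (((hasDerivAt_const φ v₀).add (hasDerivAt_const φ _)).sub
        (idφ.const_mul u₁)).const_mul ε
    have h2 : (fun φ' => v ε θ φ')
        = fun φ' => ε * (v₀ + v₁ * (θ - θi) - u₁ * (φ' - φi)) := by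
      funext φ'; exact hv ε θ φ'
    rw [h2]
    convert h1 using 1
    ring
  have d1 : deriv (fun θ' => hstar ε θ' φ * uθ ε θ' φ) θ = _ := (hPθ.mul hBθ).deriv
  have d2 : deriv (fun φ' => hstar ε θ φ' * v ε θ φ') φ = _ := (hPφ.mul hCφ).deriv
  rw [d1, d2, huθ, hv]
  have hzero : ε * (R * f / g) * (v₀ + v₁ * (θ - θi) - u₁ * (φ - φi)) *
        (ε * (u₀ + u₁ * (θ - θi) + u₂ * (φ - φi))) + hstar ε θ φ * (ε * u₁)
      + (ε * (R * f / g) * (-u₀ - u₂ * (φ - φi) - u₁ * (θ - θi)) *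
          (ε * (v₀ + v₁ * (θ - θi) - u₁ * (φ - φi))) + hstar ε θ φ * (ε * -u₁))
      = 0 := by ring
  rw [hzero]
  simp
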